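/- For every real s with −2 < s < 2 and s ≠ 0, one has ∫_ℝ e^{−s y} ( 2 sech²(y) − 6 sech⁴(y) ) dy = π s (s² − 2) / sin(π s / 2). -/

import Mathlib

open MeasureTheory Real

noncomputable def sech (x : ℝ) : ℝ := (Real.cosh x)⁻¹

open Set in
private lemma betaCongr' {a b : ℝ} {t : ℝ} (ht : 0 ≤ t) (ht1 : t ≤ 1) :
    ((t ^ (a-1) * (1-t) ^ (b-1) : ℝ) : ℂ)
      = (t : ℂ) ^ ((a:ℂ) - 1) * (1 - (t:ℂ)) ^ ((b:ℂ) - 1) := by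
  rw [Complex.ofReal_mul, Complex.ofReal_cpow ht, Complex.ofReal_cpow (by linarith)]
  push_cast
  ring_nf

open Set in
private lemma realBeta_integrable' {a b : ℝ} (ha : 0 < a) (hb : 0 < b) :
    IntegrableOn (fun t : ℝ => t ^ (a-1) * (1-t) ^ (b-1)) (Ioo (0:ℝ) 1) := by
  have h := Complex.betaIntegral_convergent (u := (a:ℂ)) (v := (b:ℂ))
    (by simpa using ha) (by simpa using hb)
  rw [intervalIntegrable_iff_integrableOn_Ioc_of_le zero_le_one] at h
  have h2 : IntegrableOn (fun t : ℝ =>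
      ((t : ℂ) ^ ((a:ℂ) - 1) * (1 - (t:ℂ)) ^ ((b:ℂ) - 1)).re) (Ioc (0:ℝ) 1) := h.re
  refine ((h2.congr_fun ?_ measurableSet_Ioc).mono_set Ioo_subset_Ioc_self)
  intro t ht
  show (_ : ℂ).re = _
  rw [← betaCongr' ht.1.le ht.2, Complex.ofReal_re]

open Set in
private lemma realBeta_eq' {a b : ℝ} (ha : 0 < a) (hb : 0 < b) :
    ∫ t in Ioo (0:ℝ) 1, t ^ (a-1) * (1-t) ^ (b-1)
      = Real.Gamma a * Real.Gamma b / Real.Gamma (a+b) := by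
  have key := Complex.Gamma_mul_Gamma_eq_betaIntegral (s := (a:ℂ)) (t := (b:ℂ))
    (by simpa using ha) (by simpa using hb)
  have hbeta : Complex.betaIntegral (a:ℂ) (b:ℂ)
      = ((∫ t in Ioo (0:ℝ) 1, t ^ (a-1) * (1-t) ^ (b-1) : ℝ) : ℂ) := by
    rw [Complex.betaIntegral]
    have hcg : (∫ x in (0:ℝ)..1, (x:ℂ) ^ ((a:ℂ)-1) * (1-(x:ℂ)) ^ ((b:ℂ)-1))
        = ∫ x in (0:ℝ)..1, ((x ^ (a-1) * (1-x) ^ (b-1) : ℝ) : ℂ) := by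
      refine intervalIntegral.integral_congr fun t ht => ?_
      rw [uIcc_of_le zero_le_one] at ht
      exact (betaCongr' ht.1 ht.2).symm
    rw [hcg, intervalIntegral.integral_ofReal, intervalIntegral.integral_of_le zero_le_one,
      integral_Ioc_eq_integral_Ioo]
  rw [hbeta, ← Complex.ofReal_add, Complex.Gamma_ofReal, Complex.Gamma_ofReal,
    Complex.Gamma_ofReal, ← Complex.ofReal_mul, ← Complex.ofReal_mul] at key
  have key2 := Complex.ofReal_inj.mp key
  have hG : Real.Gamma (a+b) ≠ 0 := (Real.Gamma_pos_of_pos (by linarith)).ne'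
  field_simp [key2]
  rw [key2]; ring

private lemma phi_deriv' (y : ℝ) :
    HasDerivAt (fun y : ℝ => (1 + Real.exp (2*y))⁻¹)
      (-(2 * Real.exp (2*y)) / (1 + Real.exp (2*y))^2) y := by
  have h1 : HasDerivAt (fun y : ℝ => 1 + Real.exp (2*y)) (2 * Real.exp (2*y)) y := by
    have h0 : HasDerivAt (fun y : ℝ => 2*y) 2 y := by
      simpa using (hasDerivAt_id y).const_mul 2
    have := (Real.hasDerivAt_exp (2*y)).comp y h0
    simpa [mul_comm] using this.const_add 1
  have h2 : (1 : ℝ) + Real.exp (2*y) ≠ 0 := by positivity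
  exact h1.inv h2

open Set in
private lemma phi_inj' : Set.InjOn (fun y : ℝ => (1 + Real.exp (2*y))⁻¹) univ := by
  intro y1 _ y2 _ h
  simp only [inv_inj, add_right_inj, Real.exp_eq_exp] at h
  linarith

open Set in
private lemma phi_image' : (fun y : ℝ => (1 + Real.exp (2*y))⁻¹) '' univ = Ioo (0:ℝ) 1 := by
  ext t
  simp only [image_univ, mem_range, mem_Ioo]
  constructor
  · rintro ⟨y, rfl⟩
    have h : (1:ℝ) < 1 + Real.exp (2*y) := by
      have := Real.exp_pos (2*y); linarith
    exact ⟨by positivity, by rw [inv_lt_one_iff₀]; right; exact h⟩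
  · rintro ⟨h0, h1⟩
    refine ⟨Real.log ((1-t)/t) / 2, ?_⟩
    rw [mul_div_cancel₀ _ (two_ne_zero), Real.exp_log (by
      apply div_pos <;> linarith)]
    field_simp
    ring

open Set in
private lemma subst_main' (g : ℝ → ℝ) :
    ∫ t in Ioo (0:ℝ) 1, g t
      = ∫ y : ℝ, (2 * Real.exp (2*y) / (1 + Real.exp (2*y))^2) * g ((1 + Real.exp (2*y))⁻¹) := by
  have h := MeasureTheory.integral_image_eq_integral_abs_deriv_smul (s := (univ : Set ℝ))
    (f := fun y : ℝ => (1 + Real.exp (2*y))⁻¹)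
    (f' := fun y : ℝ => -(2 * Real.exp (2*y)) / (1 + Real.exp (2*y))^2)
    MeasurableSet.univ (fun y _ => (phi_deriv' y).hasDerivWithinAt) phi_inj' g
  rw [phi_image'] at h
  rw [h, Measure.restrict_univ]
  refine integral_congr_ae (Filter.Eventually.of_forall fun y => ?_)
  have hpos : 0 < 2 * Real.exp (2*y) / (1 + Real.exp (2*y))^2 := by positivity
  simp only [smul_eq_mul, neg_div, abs_neg, abs_of_pos hpos]

private lemma key_rpow' (p q e2 : ℝ) (he : 0 < e2) :
    ((1+e2)⁻¹) ^ p * (1 - (1+e2)⁻¹) ^ q = e2 ^ q * (1+e2) ^ (-(p+q)) := by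
  have h1 : (0:ℝ) < 1 + e2 := by linarith
  have h2 : 1 - (1+e2)⁻¹ = e2/(1+e2) := by field_simp; ring
  rw [h2, Real.div_rpow he.le h1.le, Real.inv_rpow h1.le, ← Real.rpow_neg h1.le,
      div_eq_mul_inv, ← Real.rpow_neg h1.le, mul_left_comm, ← Real.rpow_add h1]
  rw [show -p + -q = -(p+q) by ring]

private lemma pointwise_id' (s y : ℝ) :
    2 * Real.exp (2*y) / (1 + Real.exp (2*y))^2 *
      (4 * (((1+Real.exp (2*y))⁻¹)^(s/2) * (1-(1+Real.exp (2*y))⁻¹)^(-(s/2)))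
       - 48 * (((1+Real.exp (2*y))⁻¹)^(s/2+1) * (1-(1+Real.exp (2*y))⁻¹)^(1-s/2)))
    = Real.exp (-s*y) * (2 * sech y^2 - 6 * sech y^4) := by
  have hEpos : 0 < Real.exp y := Real.exp_pos y
  have he2 : Real.exp (2*y) = Real.exp y ^ 2 := by
    rw [two_mul, Real.exp_add]; ring
  have he2pos : 0 < Real.exp (2*y) := Real.exp_pos _
  have hP : Real.exp (2*y) ^ (-(s/2)) = Real.exp (-s*y) := by
    rw [← Real.exp_mul]; congr 1; ring
  rw [key_rpow' (s/2) (-(s/2)) _ he2pos, key_rpow' (s/2+1) (1-s/2) _ he2pos,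
      show -((s/2) + -(s/2)) = 0 by ring, show -((s/2+1) + (1-s/2)) = -2 by ring,
      Real.rpow_zero]
  have hpow2 : (1 + Real.exp (2*y)) ^ (-2:ℝ) = ((1+Real.exp (2*y))^2)⁻¹ := by
    rw [show (-2:ℝ) = -(2:ℕ) by norm_num, Real.rpow_neg (by positivity), Real.rpow_natCast]
  have hq : Real.exp (2*y) ^ (1 - s/2) = Real.exp (2*y) * Real.exp (-s*y) := by
    rw [show (1 - s/2) = 1 + -(s/2) by ring, Real.rpow_add he2pos, Real.rpow_one, hP]
  rw [hpow2, hq, hP]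
  have hsech : sech y = 2*Real.exp y/(1+Real.exp y^2) := by
    rw [sech, Real.cosh_eq, Real.exp_neg]
    rw [eq_comm]
    field_simp
    ring
  rw [hsech, he2]
  have hne : (1:ℝ)+Real.exp y^2 ≠ 0 := by positivity
  field_simp
  ring

open Set in
/-- Explicit bilateral Laplace transform of `2 sech² − 6 sech⁴` from the proof of
Lemma 1.4: for `−2 < s < 2`, `s ≠ 0`,
`∫ e^{−sy} (2 sech²(y) − 6 sech⁴(y)) dy = π s (s² − 2)/sin(π s/2)`. -/
theorem laplace_transform_cubic_NLS_formula :
    ∀ s : ℝ, -2 < s → s < 2 → s ≠ 0 →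
      (∫ y : ℝ, Real.exp (-s * y) * (2 * sech y ^ 2 - 6 * sech y ^ 4))
        = π * s * (s ^ 2 - 2) / Real.sin (π * s / 2) := by
  intro s hs1 hs2 hs0
  have hu1 : (0:ℝ) < s/2 + 1 := by linarith
  have hu2 : (0:ℝ) < 1 - s/2 := by linarith
  have hu3 : (0:ℝ) < s/2 + 2 := by linarith
  have hu4 : (0:ℝ) < 2 - s/2 := by linarith
  have e1 : (fun t : ℝ => t ^ ((s/2+1)-1) * (1-t) ^ ((1-s/2)-1))
      = fun t : ℝ => t ^ (s/2) * (1-t) ^ (-(s/2)) := by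
    funext t; rw [show (s/2+1)-1 = s/2 by ring, show (1-s/2)-1 = -(s/2) by ring]
  have e2 : (fun t : ℝ => t ^ ((s/2+2)-1) * (1-t) ^ ((2-s/2)-1))
      = fun t : ℝ => t ^ (s/2+1) * (1-t) ^ (1-s/2) := by
    funext t; rw [show (s/2+2)-1 = s/2+1 by ring, show (2-s/2)-1 = 1-s/2 by ring]
  have hI1 : IntegrableOn (fun t : ℝ => t ^ (s/2) * (1-t) ^ (-(s/2))) (Ioo (0:ℝ) 1) := by
    rw [← e1]; exact realBeta_integrable' hu1 hu2
  have hI2 : IntegrableOn (fun t : ℝ => t ^ (s/2+1) * (1-t) ^ (1-s/2)) (Ioo (0:ℝ) 1) := by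
    rw [← e2]; exact realBeta_integrable' hu3 hu4
  have hV1 : ∫ t in Ioo (0:ℝ) 1, t ^ (s/2) * (1-t) ^ (-(s/2))
      = Real.Gamma (s/2+1) * Real.Gamma (1-s/2) / Real.Gamma 2 := by
    rw [← e1, realBeta_eq' hu1 hu2, show (s/2+1)+(1-s/2) = 2 by ring]
  have hV2 : ∫ t in Ioo (0:ℝ) 1, t ^ (s/2+1) * (1-t) ^ (1-s/2)
      = Real.Gamma (s/2+2) * Real.Gamma (2-s/2) / Real.Gamma 4 := by
    rw [← e2, realBeta_eq' hu3 hu4, show (s/2+2)+(2-s/2) = 4 by ring]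
  have hmain : (∫ y : ℝ, Real.exp (-s * y) * (2 * sech y ^ 2 - 6 * sech y ^ 4))
      = ∫ t in Ioo (0:ℝ) 1,
          (4 * (t ^ (s/2) * (1-t) ^ (-(s/2))) - 48 * (t ^ (s/2+1) * (1-t) ^ (1-s/2))) := by
    rw [subst_main']
    exact integral_congr_ae (Filter.Eventually.of_forall fun y => (pointwise_id' s y).symm)
  rw [hmain, integral_sub ((hI1.const_mul 4)) ((hI2.const_mul 48)),
    integral_const_mul, integral_const_mul, hV1, hV2]
  have hG2 : Real.Gamma 2 = 1 := by
    rw [show (2:ℝ) = 1 + 1 by norm_num, Real.Gamma_add_one one_ne_zero, Real.Gamma_one, mul_one]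
  have hG3 : Real.Gamma 3 = 2 := by
    rw [show (3:ℝ) = 2+1 by norm_num, Real.Gamma_add_one two_ne_zero, hG2]; norm_num
  have hG4 : Real.Gamma 4 = 6 := by
    rw [show (4:ℝ) = 3+1 by norm_num, Real.Gamma_add_one three_ne_zero, hG3]; norm_num
  have hA : Real.Gamma (s/2+1) = s/2 * Real.Gamma (s/2) := Real.Gamma_add_one (by
    intro h; apply hs0; linarith [h] )
  have hB : Real.Gamma (s/2+2) = (s/2+1) * Real.Gamma (s/2+1) := by
    rw [show s/2+2 = (s/2+1)+1 by ring]; exact Real.Gamma_add_one hu1.ne'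
  have hC : Real.Gamma (2-s/2) = (1-s/2) * Real.Gamma (1-s/2) := by
    rw [show 2-s/2 = (1-s/2)+1 by ring]; exact Real.Gamma_add_one hu2.ne'
  have hrefl : Real.Gamma (s/2) * Real.Gamma (1-s/2) = π / Real.sin (π * s / 2) := by
    rw [show (1:ℝ)-s/2 = 1-(s/2) by ring, Real.Gamma_mul_Gamma_one_sub,
      show π * (s/2) = π * s / 2 by ring]
  rw [hG2, hG4, hA, hB, hC, hA]
  linear_combination (s^3 - 2*s) * hrefl
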